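/- For even n ≥ 10, the circulant graph C_n(1, n/2 − 1) is isomorphic to the wreath graph W(n/2, 2); in particular, for every vertex v_i, the vertices v_i and v_{i+n/2} have exactly the same set of neighbors. -/

import Mathlib

open SimpleGraph

/-- The wreath graph `W(a, 2)`: vertex set `ZMod a × Fin 2`, with `(i, s)` adjacent to
`(j, t)` iff `i − j ≡ ±1 (mod a)`. -/
def wreathGraph (a : ℕ) : SimpleGraph (ZMod a × Fin 2) where
  Adj p q := p ≠ q ∧ (p.1 - q.1 = 1 ∨ q.1 - p.1 = 1)
  symm := by
    constructor
    intro p q h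
    exact ⟨Ne.symm h.1, h.2.symm⟩
  loopless := by
    constructor
    intro p h
    exact h.1 rfl

/-- For even `n ≥ 10`, `C_n(1, n/2 − 1)` is isomorphic to the wreath graph `W(n/2, 2)`;
in particular `v_i` and `v_{i + n/2}` have exactly the same neighbors. -/
theorem stmt_7 (n : ℕ) (hn : 10 ≤ n) (hev : Even n) :
    Nonempty (circulantGraph ({1, ((n / 2 - 1 : ℕ) : ZMod n)} : Set (ZMod n)) ≃g
        wreathGraph (n / 2)) ∧
    ∀ i w : ZMod n,
      (circulantGraph ({1, ((n / 2 - 1 : ℕ) : ZMod n)} : Set (ZMod n))).Adj i w ↔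
      (circulantGraph ({1, ((n / 2 - 1 : ℕ) : ZMod n)} : Set (ZMod n))).Adj
        (i + ((n / 2 : ℕ) : ZMod n)) w := by
  obtain ⟨r, hr⟩ := hev
  set m := n / 2 with hmdef
  have hn2 : n = 2 * m := by omega
  have hm5 : 5 ≤ m := by omega
  haveI : NeZero n := ⟨by omega⟩
  haveI : NeZero m := ⟨by omega⟩
  haveI : Fact (1 < m) := ⟨by omega⟩
  set c : ZMod n := ((m - 1 : ℕ) : ZMod n) with hcdef
  set G := circulantGraph ({1, c} : Set (ZMod n)) with hGdef
  have hdvd : m ∣ n := ⟨2, by omega⟩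
  set φ : ZMod n →+* ZMod m := ZMod.castHom hdvd (ZMod m) with hφdef
  have hφval : ∀ e : ZMod n, φ e = ((e.val : ℕ) : ZMod m) := by
    intro e
    rw [ZMod.natCast_val, ZMod.castHom_apply]
  have hφm : φ ((m : ℕ) : ZMod n) = 0 := by
    rw [map_natCast, ZMod.natCast_self]
  have hcn : c = ((m : ℕ) : ZMod n) - 1 := by
    rw [hcdef, Nat.cast_sub (by omega), Nat.cast_one]
  have hm0 : ((m : ℕ) : ZMod n) + ((m : ℕ) : ZMod n) = 0 := by
    rw [← Nat.cast_add]
    have : m + m = n := by omega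
    rw [this, ZMod.natCast_self]
  have hc : φ c = -1 := by
    rw [hcn, map_sub, hφm, map_one]
    ring
  have hker : ∀ e : ZMod n, φ e = 0 → e = 0 ∨ e = ((m : ℕ) : ZMod n) := by
    intro e he
    rw [hφval, ZMod.natCast_eq_zero_iff] at he
    obtain ⟨k, hk⟩ := he
    have hlt : e.val < n := ZMod.val_lt e
    have : e.val = 0 ∨ e.val = m := by
      rcases Nat.lt_or_ge k 2 with h | h
      · interval_cases k <;> omega
      · nlinarith
    rcases this with h | h
    · left
      rw [← ZMod.natCast_zmod_val e, h, Nat.cast_zero]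
    · right
      rw [← ZMod.natCast_zmod_val e, h]
  have hnz : ∀ d : ZMod n, φ d = 1 ∨ φ d = -1 → d ≠ 0 := by
    intro d h h0
    subst h0
    rw [map_zero] at h
    rcases h with h | h
    · exact one_ne_zero h.symm
    · exact one_ne_zero (neg_eq_zero.mp h.symm)
  have adj : ∀ x y : ZMod n, G.Adj x y ↔ (φ (x - y) = 1 ∨ φ (x - y) = -1) := by
    intro x y
    rw [hGdef]
    simp only [circulantGraph_adj, Set.mem_insert_iff, Set.mem_singleton_iff]
    constructor
    · rintro ⟨hxy, (h | h) | (h | h)⟩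
      · left; rw [h, map_one]
      · right; rw [h, hc]
      · right
        have hx : x - y = -1 := by linear_combination -h
        rw [hx, map_neg, map_one]
      · left
        have hx : x - y = -c := by linear_combination -h
        rw [hx, map_neg, hc, neg_neg]
    · intro h
      refine ⟨sub_ne_zero.mp (hnz _ h), ?_⟩
      rcases h with h | h
      · have h0 : φ (x - y - 1) = 0 := by rw [map_sub, map_one, h, sub_self]
        rcases hker _ h0 with h1 | h1
        · left; left; linear_combination h1
        · right; right; linear_combination -h1 - hcn - hm0
      · have h0 : φ (x - y + 1) = 0 := by rw [map_add, map_one, h]; ring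
        rcases hker _ h0 with h1 | h1
        · right; left; linear_combination -h1
        · left; right; linear_combination h1 - hcn
  constructor
  · -- the isomorphism
    have wadj : ∀ p q : ZMod m × Fin 2,
        (wreathGraph m).Adj p q ↔ (p.1 - q.1 = 1 ∨ q.1 - p.1 = 1) := by
      intro p q
      constructor
      · exact fun h => h.2
      · intro h
        refine ⟨?_, h⟩
        intro hpq
        rw [hpq] at h
        simp only [sub_self] at h
        rcases h with h | h <;> exact one_ne_zero h.symm
    refine ⟨⟨⟨fun x => (φ x, ⟨x.val / m, Nat.div_lt_of_lt_mul (by have := ZMod.val_lt x; omega)⟩),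
        fun p => ((p.1.val + m * p.2.val : ℕ) : ZMod n), ?_, ?_⟩, ?_⟩⟩
    · intro x
      have h1 : (φ x).val = x.val % m := by rw [hφval, ZMod.val_natCast]
      simp only [h1]
      rw [Nat.mod_add_div, ZMod.natCast_zmod_val]
    · rintro ⟨i, s⟩
      have hlt : i.val + m * s.val < n := by
        have h1 := ZMod.val_lt i
        have h2 := s.isLt
        have h3 : m * s.val ≤ m * 1 := Nat.mul_le_mul_left _ (by omega)
        omega
      have hval : (((i.val + m * s.val : ℕ) : ZMod n)).val = i.val + m * s.val :=
        ZMod.val_cast_of_lt hlt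
      refine Prod.ext ?_ ?_
      · show φ _ = i
        rw [map_natCast, Nat.cast_add, Nat.cast_mul, ZMod.natCast_self, zero_mul, add_zero,
          ZMod.natCast_zmod_val]
      · apply Fin.ext
        show (((i.val + m * s.val : ℕ) : ZMod n)).val / m = s.val
        rw [hval, Nat.add_mul_div_left _ _ (by omega : 0 < m),
          Nat.div_eq_of_lt (ZMod.val_lt i), zero_add]
    · intro x y
      show (wreathGraph m).Adj _ _ ↔ G.Adj x y
      rw [wadj, adj]
      show (φ x - φ y = 1 ∨ φ y - φ x = 1) ↔ _
      have h2 : φ y - φ x = -φ (x - y) := by rw [← map_neg, neg_sub, map_sub]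
      rw [← map_sub, h2, neg_eq_iff_eq_neg]
  · intro i w
    rw [adj, adj]
    have key : φ (i + ((m : ℕ) : ZMod n) - w) = φ (i - w) := by
      have : i + ((m : ℕ) : ZMod n) - w = (i - w) + ((m : ℕ) : ZMod n) := by ring
      rw [this, map_add, hφm, add_zero]
    rw [key]
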